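/- Let [A] be an interval matrix with midpoint Ac = (1/2)(A̲+Ā), and suppose Ac is an M0-matrix. Then [A] is strongly semimonotone if and only if A̲ is an M0-matrix. -/

import Mathlib

open Matrix

/-- Spectral radius of a real square matrix (via its complex spectrum). -/
noncomputable def specRad {n : ℕ} (A : Matrix (Fin n) (Fin n) ℝ) : ℝ :=
  (spectralRadius ℂ (A.map (algebraMap ℝ ℂ))).toReal

/-- `A` is an M-matrix: `A = s•I - N` with `N ≥ 0` and `s > ρ(N)`. -/
def IsMMatrix {n : ℕ} (A : Matrix (Fin n) (Fin n) ℝ) : Prop :=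
  ∃ (s : ℝ) (N : Matrix (Fin n) (Fin n) ℝ),
    (∀ i j, 0 ≤ N i j) ∧ A = s • (1 : Matrix (Fin n) (Fin n) ℝ) - N ∧ specRad N < s

/-- `A` is an M0-matrix: `A = s•I - N` with `N ≥ 0` and `s ≥ ρ(N)`. -/
def IsM0Matrix {n : ℕ} (A : Matrix (Fin n) (Fin n) ℝ) : Prop :=
  ∃ (s : ℝ) (N : Matrix (Fin n) (Fin n) ℝ),
    (∀ i j, 0 ≤ N i j) ∧ A = s • (1 : Matrix (Fin n) (Fin n) ℝ) - N ∧ specRad N ≤ s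

/-- Comparison matrix. -/
def compMatrix {n : ℕ} (A : Matrix (Fin n) (Fin n) ℝ) : Matrix (Fin n) (Fin n) ℝ :=
  fun i j => if i = j then |A i i| else -|A i j|

def IsHMatrix {n : ℕ} (A : Matrix (Fin n) (Fin n) ℝ) : Prop :=
  IsMMatrix (compMatrix A)

def IsSMatrix {n : ℕ} (A : Matrix (Fin n) (Fin n) ℝ) : Prop :=
  ∃ x : Fin n → ℝ, (∀ i, 0 < x i) ∧ (∀ i, 0 < A.mulVec x i)

def Copositive {n : ℕ} (A : Matrix (Fin n) (Fin n) ℝ) : Prop :=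
  ∀ x : Fin n → ℝ, (∀ i, 0 ≤ x i) → 0 ≤ x ⬝ᵥ A.mulVec x

def StrictlyCopositive {n : ℕ} (A : Matrix (Fin n) (Fin n) ℝ) : Prop :=
  ∀ x : Fin n → ℝ, (∀ i, 0 ≤ x i) → x ≠ 0 → 0 < x ⬝ᵥ A.mulVec x

def Semimonotone {n : ℕ} (A : Matrix (Fin n) (Fin n) ℝ) : Prop :=
  ∀ I : Finset (Fin n), I.Nonempty →
    ¬ ∃ x : ↥I → ℝ,
      (∀ i, (A.submatrix ((↑) : ↥I → Fin n) ((↑) : ↥I → Fin n)).mulVec x i < 0) ∧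
      (∀ i, 0 ≤ x i)

def PrincipallyNondegenerate {n : ℕ} (A : Matrix (Fin n) (Fin n) ℝ) : Prop :=
  ∀ I : Finset (Fin n), I.Nonempty →
    (A.submatrix ((↑) : ↥I → Fin n) ((↑) : ↥I → Fin n)).det ≠ 0

/-- A nonnegative matrix is irreducible if `(I + A)^(n-1) > 0` entrywise. -/
def IrreducibleMat {n : ℕ} (A : Matrix (Fin n) (Fin n) ℝ) : Prop :=
  ∀ i j, 0 < ((1 + A) ^ (n - 1)) i j

/-- The block matrix `[[A_II, -A_IJ], [-A_JI, A_JJ]]`. -/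
def csBlock {n : ℕ} (A : Matrix (Fin n) (Fin n) ℝ) (I J : Finset (Fin n)) :
    Matrix (↥I ⊕ ↥J) (↥I ⊕ ↥J) ℝ :=
  Matrix.fromBlocks
    (A.submatrix ((↑) : ↥I → Fin n) ((↑) : ↥I → Fin n))
    (-(A.submatrix ((↑) : ↥I → Fin n) ((↑) : ↥J → Fin n)))
    (-(A.submatrix ((↑) : ↥J → Fin n) ((↑) : ↥I → Fin n)))
    (A.submatrix ((↑) : ↥J → Fin n) ((↑) : ↥J → Fin n))

def ColumnSufficient {n : ℕ} (A : Matrix (Fin n) (Fin n) ℝ) : Prop :=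
  ∀ I J : Finset (Fin n), Disjoint I J → (I ∪ J).Nonempty →
    ¬ ∃ x : (↥I ⊕ ↥J) → ℝ,
      (∀ k, (csBlock A I J).mulVec x k ≤ 0) ∧
      (csBlock A I J).mulVec x ≠ 0 ∧
      (∀ k, 0 < x k)

def IsR0Matrix {n : ℕ} (A : Matrix (Fin n) (Fin n) ℝ) : Prop :=
  ∀ I : Finset (Fin n), I.Nonempty →
    ¬ ∃ x : ↥I → ℝ,
      (∀ i, (A.submatrix ((↑) : ↥I → Fin n) ((↑) : ↥I → Fin n)).mulVec x i = 0) ∧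
      (∀ j : ↥(Iᶜ : Finset (Fin n)),
        0 ≤ (A.submatrix ((↑) : ↥(Iᶜ : Finset (Fin n)) → Fin n) ((↑) : ↥I → Fin n)).mulVec x j) ∧
      (∀ i, 0 < x i)

def IsRMatrix {n : ℕ} (A : Matrix (Fin n) (Fin n) ℝ) : Prop :=
  ∀ I : Finset (Fin n), I.Nonempty →
    ¬ ∃ (x : ↥I → ℝ) (t : ℝ),
      (∀ i, (A.submatrix ((↑) : ↥I → Fin n) ((↑) : ↥I → Fin n)).mulVec x i + t = 0) ∧
      (∀ j : ↥(Iᶜ : Finset (Fin n)),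
        0 ≤ (A.submatrix ((↑) : ↥(Iᶜ : Finset (Fin n)) → Fin n) ((↑) : ↥I → Fin n)).mulVec x j + t) ∧
      (∀ i, 0 < x i) ∧ 0 ≤ t

def PosDefMat {n : ℕ} (A : Matrix (Fin n) (Fin n) ℝ) : Prop :=
  ∀ x : Fin n → ℝ, x ≠ 0 → 0 < x ⬝ᵥ A.mulVec x

def PosSemidefMat {n : ℕ} (A : Matrix (Fin n) (Fin n) ℝ) : Prop :=
  ∀ x : Fin n → ℝ, 0 ≤ x ⬝ᵥ A.mulVec x

/-- Membership of `A` in the interval matrix `[Al, Au]`. -/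
def memInterval {n : ℕ} (Al Au A : Matrix (Fin n) (Fin n) ℝ) : Prop :=
  ∀ i j, Al i j ≤ A i j ∧ A i j ≤ Au i j

/-- The mixed block matrix `[[Al_II, -Au_IJ], [-Au_JI, Al_JJ]]`. -/
def csMixedBlock {n : ℕ} (Al Au : Matrix (Fin n) (Fin n) ℝ) (I J : Finset (Fin n)) :
    Matrix (↥I ⊕ ↥J) (↥I ⊕ ↥J) ℝ :=
  Matrix.fromBlocks
    (Al.submatrix ((↑) : ↥I → Fin n) ((↑) : ↥I → Fin n))
    (-(Au.submatrix ((↑) : ↥I → Fin n) ((↑) : ↥J → Fin n)))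
    (-(Au.submatrix ((↑) : ↥J → Fin n) ((↑) : ↥I → Fin n)))
    (Al.submatrix ((↑) : ↥J → Fin n) ((↑) : ↥J → Fin n))

section SpecAux

attribute [local instance] Matrix.linftyOpNormedRing Matrix.linftyOpNormedAlgebra

open Filter Finset

variable {n : ℕ}

lemma specRad_nonneg (N : Matrix (Fin n) (Fin n) ℝ) : 0 ≤ specRad N := ENNReal.toReal_nonneg

lemma mulVec_apply' (M : Matrix (Fin n) (Fin n) ℝ) (v : Fin n → ℝ) (i : Fin n) :
    M.mulVec v i = ∑ j, M i j * v j := rfl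

lemma entry_norm_le (A : Matrix (Fin n) (Fin n) ℂ) (i j : Fin n) : ‖A i j‖ ≤ ‖A‖ := by
  have h1 : ‖A i j‖₊ ≤ ‖A‖₊ := by
    rw [Matrix.linfty_opNNNorm_def]
    exact le_trans
      (Finset.single_le_sum (f := fun k => ‖A i k‖₊) (fun _ _ => zero_le) (Finset.mem_univ j))
      (Finset.le_sup (f := fun i => ∑ j, ‖A i j‖₊) (Finset.mem_univ i))
  exact_mod_cast h1

lemma pow_entry_nonneg {N : Matrix (Fin n) (Fin n) ℝ} (hN : ∀ i j, 0 ≤ N i j) (m : ℕ) :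
    ∀ i j, 0 ≤ (N ^ m) i j := by
  induction m with
  | zero =>
    intro i j
    rw [pow_zero]
    by_cases h : i = j <;> simp [Matrix.one_apply, h]
  | succ m ih =>
    intro i j
    rw [pow_succ, Matrix.mul_apply]
    exact Finset.sum_nonneg fun k _ => mul_nonneg (ih i k) (hN k j)

lemma mulVec_nonneg {N : Matrix (Fin n) (Fin n) ℝ} (hN : ∀ i j, 0 ≤ N i j)
    {v : Fin n → ℝ} (hv : ∀ i, 0 ≤ v i) (i : Fin n) : 0 ≤ N.mulVec v i := by
  rw [mulVec_apply']
  exact Finset.sum_nonneg fun j _ => mul_nonneg (hN i j) (hv j)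

lemma eventually_pow_entry_le {N : Matrix (Fin n) (Fin n) ℝ} {r : ℝ} (hr : specRad N < r) :
    ∀ᶠ m in atTop, ∀ i j, |(N ^ m) i j| ≤ r ^ m := by
  rcases isEmpty_or_nonempty (Fin n) with hemp | hne
  · exact Filter.Eventually.of_forall fun m i j => (hemp.false i).elim
  set a : Matrix (Fin n) (Fin n) ℂ := N.map (algebraMap ℝ ℂ) with ha
  have hr0 : 0 < r := lt_of_le_of_lt (specRad_nonneg N) hr
  have hnet : spectralRadius ℂ a ≠ ⊤ :=
    ne_top_of_le_ne_top ENNReal.coe_ne_top (spectrum.spectralRadius_le_nnnorm (𝕜 := ℂ) a)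
  have hlt : spectralRadius ℂ a < ENNReal.ofReal r := by
    rw [← ENNReal.ofReal_toReal hnet]
    exact (ENNReal.ofReal_lt_ofReal_iff hr0).mpr hr
  have hT := spectrum.pow_norm_pow_one_div_tendsto_nhds_spectralRadius a
  have hev : ∀ᶠ m : ℕ in atTop, ENNReal.ofReal (‖a ^ m‖ ^ (1 / (m : ℝ))) < ENNReal.ofReal r :=
    hT.eventually_lt_const hlt
  filter_upwards [hev, eventually_ge_atTop 1] with m hm hm1 i j
  have hmR : (1 : ℝ) ≤ (m : ℝ) := by exact_mod_cast hm1
  have hm0 : (m : ℝ) ≠ 0 := by linarith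
  have h1 : ‖a ^ m‖ ^ (1 / (m : ℝ)) < r := by
    have h2 := hm
    rw [ENNReal.ofReal_lt_ofReal_iff hr0] at h2
    exact h2
  have hnorm : ‖a ^ m‖ ≤ r ^ m := by
    have h3 : ((‖a ^ m‖ ^ (1 / (m : ℝ))) : ℝ) ^ (m : ℕ) ≤ r ^ m :=
      pow_le_pow_left₀ (Real.rpow_nonneg (norm_nonneg _) _) h1.le m
    rwa [← Real.rpow_natCast (‖a ^ m‖ ^ (1 / (m : ℝ))) m, ← Real.rpow_mul (norm_nonneg _),
      one_div_mul_cancel hm0, Real.rpow_one] at h3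
  have hmap : a ^ m = (N ^ m).map (algebraMap ℝ ℂ) := by
    have h4 : ((algebraMap ℝ ℂ).mapMatrix (N ^ m) : Matrix (Fin n) (Fin n) ℂ)
        = ((algebraMap ℝ ℂ).mapMatrix N) ^ m := map_pow _ N m
    rw [RingHom.mapMatrix_apply, RingHom.mapMatrix_apply] at h4
    rw [ha, ← h4]
  have h5 : |(N ^ m) i j| = ‖(a ^ m) i j‖ := by
    rw [hmap, Matrix.map_apply, Complex.coe_algebraMap, Complex.norm_real, Real.norm_eq_abs]
  rw [h5]
  exact le_trans (entry_norm_le _ i j) hnorm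

lemma le_specRad_of_mulVec_le {N : Matrix (Fin n) (Fin n) ℝ} (hN : ∀ i j, 0 ≤ N i j)
    {x : Fin n → ℝ} (hx : ∀ i, 0 ≤ x i) {i0 : Fin n} (hx0 : 0 < x i0) {t : ℝ}
    (ht : ∀ i, t * x i ≤ N.mulVec x i) : t ≤ specRad N := by
  by_contra hlt
  push_neg at hlt
  have ht0 : 0 < t := lt_of_le_of_lt (specRad_nonneg N) hlt
  set r : ℝ := (specRad N + t) / 2 with hrdef
  have hr1 : specRad N < r := by rw [hrdef]; linarith
  have hr2 : r < t := by rw [hrdef]; linarith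
  have hr0 : 0 < r := lt_of_le_of_lt (specRad_nonneg N) hr1
  -- telescoping identity
  have hterm : ∀ k : ℕ, ((t ^ (k+1))⁻¹ • N ^ k) * (t • (1 : Matrix (Fin n) (Fin n) ℝ) - N)
      = (t ^ k)⁻¹ • N ^ k - (t ^ (k+1))⁻¹ • N ^ (k+1) := by
    intro k
    rw [mul_sub]
    congr 1
    · rw [Matrix.smul_mul, Matrix.mul_smul, Matrix.mul_one, smul_smul]
      congr 1
      rw [pow_succ]
      field_simp
    · rw [Matrix.smul_mul, ← pow_succ]
  have hid : ∀ m : ℕ, (∑ k ∈ Finset.range m, (t ^ (k+1))⁻¹ • N ^ k)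
        * (t • (1 : Matrix (Fin n) (Fin n) ℝ) - N)
      = 1 - (t ^ m)⁻¹ • N ^ m := by
    intro m
    rw [Finset.sum_mul]
    calc ∑ k ∈ Finset.range m, ((t ^ (k+1))⁻¹ • N ^ k) * (t • (1 : Matrix (Fin n) (Fin n) ℝ) - N)
        = ∑ k ∈ Finset.range m, ((fun k => (t ^ k)⁻¹ • N ^ k) k
            - (fun k => (t ^ k)⁻¹ • N ^ k) (k+1)) := by
          refine Finset.sum_congr rfl fun k _ => ?_
          exact hterm k
      _ = (t ^ 0)⁻¹ • N ^ 0 - (t ^ m)⁻¹ • N ^ m := Finset.sum_range_sub' _ m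
      _ = 1 - (t ^ m)⁻¹ • N ^ m := by simp
  have hkey : ∀ m : ℕ, x i0 ≤ (t ^ m)⁻¹ * ((N ^ m).mulVec x i0) := by
    intro m
    set S : Matrix (Fin n) (Fin n) ℝ := ∑ k ∈ Finset.range m, (t ^ (k+1))⁻¹ • N ^ k with hS
    have hSpos : ∀ i j, 0 ≤ S i j := by
      intro i j
      rw [hS, Matrix.sum_apply]
      refine Finset.sum_nonneg fun k _ => ?_
      rw [Matrix.smul_apply, smul_eq_mul]
      exact mul_nonneg (inv_nonneg.mpr (pow_nonneg ht0.le _)) (pow_entry_nonneg hN k i j)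
    have hy : ∀ j, (t • (1 : Matrix (Fin n) (Fin n) ℝ) - N).mulVec x j ≤ 0 := by
      intro j
      rw [Matrix.sub_mulVec, Matrix.smul_mulVec, Matrix.one_mulVec]
      simp only [Pi.sub_apply, Pi.smul_apply, smul_eq_mul]
      linarith [ht j]
    have h1 : S.mulVec ((t • (1 : Matrix (Fin n) (Fin n) ℝ) - N).mulVec x)
        = x - (t ^ m)⁻¹ • ((N ^ m).mulVec x) := by
      rw [Matrix.mulVec_mulVec, hS, hid m, Matrix.sub_mulVec, Matrix.one_mulVec,
        Matrix.smul_mulVec]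
    have h2 : S.mulVec ((t • (1 : Matrix (Fin n) (Fin n) ℝ) - N).mulVec x) i0 ≤ 0 := by
      rw [mulVec_apply']
      exact Finset.sum_nonpos fun j _ => mul_nonpos_of_nonneg_of_nonpos (hSpos i0 j) (hy j)
    rw [h1] at h2
    simp only [Pi.sub_apply, Pi.smul_apply, smul_eq_mul] at h2
    linarith
  -- eventual bound
  set C : ℝ := ∑ j, x j with hC
  have hCpos : 0 ≤ C := Finset.sum_nonneg fun j _ => hx j
  have hub : ∀ᶠ m in atTop, x i0 ≤ (r / t) ^ m * C := by
    filter_upwards [eventually_pow_entry_le hr1] with m hm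
    have h3 : (N ^ m).mulVec x i0 ≤ r ^ m * C := by
      rw [mulVec_apply', hC, Finset.mul_sum]
      refine Finset.sum_le_sum fun j _ => ?_
      exact mul_le_mul_of_nonneg_right (le_trans (le_abs_self _) (hm i0 j)) (hx j)
    refine le_trans (hkey m) ?_
    rw [div_pow, div_eq_mul_inv, mul_comm (r ^ m), mul_assoc]
    exact mul_le_mul_of_nonneg_left h3 (inv_nonneg.mpr (pow_nonneg ht0.le _))
  have hrt : 0 ≤ r / t := div_nonneg hr0.le ht0.le
  have hrt1 : r / t < 1 := (div_lt_one ht0).mpr hr2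
  have htend : Tendsto (fun m : ℕ => (r / t) ^ m * C) atTop (nhds 0) := by
    have := (tendsto_pow_atTop_nhds_zero_of_lt_one hrt hrt1).mul_const C
    simpa using this
  have hlt2 : ∀ᶠ m in atTop, (r / t) ^ m * C < x i0 := htend.eventually_lt_const hx0
  obtain ⟨m, h4, h5⟩ := (hub.and hlt2).exists
  linarith

lemma exists_perron_like [NeZero n] {N : Matrix (Fin n) (Fin n) ℝ} (hN : ∀ i j, 0 ≤ N i j) :
    ∃ x : Fin n → ℝ, (∀ i, 0 ≤ x i) ∧ (∃ i0, 0 < x i0) ∧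
      ∀ i, specRad N * x i ≤ N.mulVec x i := by
  set a : Matrix (Fin n) (Fin n) ℂ := N.map (algebraMap ℝ ℂ) with ha
  obtain ⟨z, hz, hznorm⟩ := spectrum.exists_nnnorm_eq_spectralRadius a
  have hs : specRad N = ‖z‖ := by
    rw [specRad, ← ha, ← hznorm]
    simp
  have hdet : (z • (1 : Matrix (Fin n) (Fin n) ℂ) - a).det = 0 := by
    have h1 := spectrum.mem_iff.mp hz
    rw [Algebra.algebraMap_eq_smul_one] at h1
    by_contra hdet
    exact h1 ((Matrix.isUnit_iff_isUnit_det _).mpr (isUnit_iff_ne_zero.mpr hdet))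
  obtain ⟨v, hv0, hv⟩ := Matrix.exists_mulVec_eq_zero_iff.mpr hdet
  have hav : a.mulVec v = z • v := by
    rw [Matrix.sub_mulVec, Matrix.smul_mulVec, Matrix.one_mulVec, sub_eq_zero] at hv
    exact hv.symm
  refine ⟨fun i => ‖v i‖, fun i => norm_nonneg _, ?_, ?_⟩
  · obtain ⟨i0, hi0⟩ := Function.ne_iff.mp hv0
    exact ⟨i0, norm_pos_iff.mpr hi0⟩
  · intro i
    rw [hs]
    calc ‖z‖ * ‖v i‖ = ‖z * v i‖ := (norm_mul z (v i)).symm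
      _ = ‖(a.mulVec v) i‖ := by rw [hav]; simp
      _ = ‖∑ j, a i j * v j‖ := rfl
      _ ≤ ∑ j, ‖a i j * v j‖ := norm_sum_le _ _
      _ = ∑ j, N i j * ‖v j‖ := by
          refine Finset.sum_congr rfl fun j _ => ?_
          rw [norm_mul, ha, Matrix.map_apply, Complex.coe_algebraMap, Complex.norm_real,
            Real.norm_eq_abs, abs_of_nonneg (hN i j)]
      _ = N.mulVec (fun j => ‖v j‖) i := (mulVec_apply' _ _ _).symm

lemma sum_subtype_eq_sum_univ (I : Finset (Fin n)) (g : Fin n → ℝ)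
    (hg : ∀ j, j ∉ I → g j = 0) : ∑ j : ↥I, g ↑j = ∑ j, g j := by
  rw [Finset.sum_coe_sort I g]
  exact Finset.sum_subset (Finset.subset_univ I) fun j _ hj => hg j hj

lemma specRad_zero_mat : specRad (0 : Matrix (Fin n) (Fin n) ℝ) = 0 := by
  unfold specRad
  rw [Matrix.map_zero _ (map_zero _), spectrum.spectralRadius_zero]
  rfl

end SpecAux

theorem stmt_5 {n : ℕ} (Al Au : Matrix (Fin n) (Fin n) ℝ)
    (hle : ∀ i j, Al i j ≤ Au i j)
    (Ac : Matrix (Fin n) (Fin n) ℝ) (hAc : Ac = (1/2 : ℝ) • (Al + Au)) (hM : IsM0Matrix Ac) :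
    (∀ A : Matrix (Fin n) (Fin n) ℝ, memInterval Al Au A → Semimonotone A) ↔ IsM0Matrix Al := by
  constructor
  · intro hAll
    rcases Nat.eq_zero_or_pos n with h0 | hn
    · subst h0
      refine ⟨0, 0, fun i j => le_rfl, ?_, ?_⟩
      · ext i j; exact i.elim0
      · rw [specRad_zero_mat]
    · haveI : NeZero n := ⟨hn.ne'⟩
      have hsemi : Semimonotone Al := hAll Al (fun i j => ⟨le_rfl, hle i j⟩)
      set s : ℝ := Finset.univ.sup' Finset.univ_nonempty (fun i => Al i i) with hs
      set N : Matrix (Fin n) (Fin n) ℝ := s • 1 - Al with hNdef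
      have hAlN : Al = s • (1 : Matrix (Fin n) (Fin n) ℝ) - N := (sub_sub_cancel _ _).symm
      have hNpos : ∀ i j, 0 ≤ N i j := by
        intro i j
        by_cases hij : i = j
        · subst hij
          have h1 : Al i i ≤ s := Finset.le_sup' (fun i => Al i i) (Finset.mem_univ i)
          rw [hNdef]
          simp only [Matrix.sub_apply, Matrix.smul_apply, Matrix.one_apply_eq, smul_eq_mul,
            mul_one]
          linarith
        · obtain ⟨s0, N0, hN0, hAc0, _⟩ := hM
          have h1 : Ac i j ≤ 0 := by
            rw [hAc0]
            have h2 := hN0 i j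
            simp only [Matrix.sub_apply, Matrix.smul_apply, Matrix.one_apply_ne hij, smul_eq_mul,
              mul_zero]
            linarith
          have h2 : Al i j ≤ Ac i j := by
            rw [hAc]
            simp only [Matrix.smul_apply, Matrix.add_apply, smul_eq_mul]
            linarith [hle i j]
          rw [hNdef]
          simp only [Matrix.sub_apply, Matrix.smul_apply, Matrix.one_apply_ne hij, smul_eq_mul,
            mul_zero]
          linarith
      refine ⟨s, N, hNpos, hAlN, ?_⟩
      by_contra hlt
      push_neg at hlt
      obtain ⟨x, hx, ⟨i0, hi0⟩, hperron⟩ := exists_perron_like hNpos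
      set I : Finset (Fin n) := Finset.univ.filter (fun i => 0 < x i) with hI
      have hi0I : i0 ∈ I := by simp [hI, hi0]
      refine hsemi I ⟨i0, hi0I⟩ ⟨fun j => x ↑j, fun i => ?_, fun j => hx ↑j⟩
      have hxi : 0 < x ↑i := by
        have h0 := i.2
        simp only [hI, Finset.mem_filter] at h0
        exact h0.2
      have h3 : (Al.submatrix ((↑) : ↥I → Fin n) ((↑) : ↥I → Fin n)).mulVec (fun j => x ↑j) i
          = Al.mulVec x ↑i := by
        refine sum_subtype_eq_sum_univ I (fun j => Al ↑i j * x j) ?_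
        intro j hj
        have hxj : x j = 0 := by
          by_contra hxj
          refine hj ?_
          simp only [hI, Finset.mem_filter]
          exact ⟨Finset.mem_univ j, lt_of_le_of_ne (hx j) (Ne.symm hxj)⟩
        show Al ↑i j * x j = 0
        rw [hxj, mul_zero]
      rw [h3, hAlN, Matrix.sub_mulVec, Matrix.smul_mulVec, Matrix.one_mulVec]
      simp only [Pi.sub_apply, Pi.smul_apply, smul_eq_mul]
      have h5 := hperron ↑i
      nlinarith
  · intro hAl A hA I hI
    rintro ⟨x, hneg, hpos⟩
    obtain ⟨s, N, hN, hAleq, hrad⟩ := hAl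
    classical
    set xt : Fin n → ℝ := fun j => if h : j ∈ I then x ⟨j, h⟩ else 0 with hxt
    have hxtnn : ∀ j, 0 ≤ xt j := by
      intro j
      rw [hxt]
      dsimp only
      split
      · exact hpos _
      · exact le_rfl
    have hxtI : ∀ (j : Fin n) (h : j ∈ I), xt j = x ⟨j, h⟩ := fun j h => dif_pos h
    have hxt0 : ∀ j, j ∉ I → xt j = 0 := fun j h => dif_neg h
    have hAlx : ∀ i : ↥I, Al.mulVec xt ↑i < 0 := by
      intro i
      have h1 : Al.mulVec xt ↑i = ∑ j : ↥I, Al ↑i ↑j * x j := by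
        rw [mulVec_apply']
        rw [← sum_subtype_eq_sum_univ I (fun j => Al ↑i j * xt j)
          (fun j hj => by show Al ↑i j * xt j = 0; rw [hxt0 j hj, mul_zero])]
        refine Finset.sum_congr rfl fun j _ => ?_
        rw [hxtI ↑j j.2]
      rw [h1]
      have h2 : ∑ j : ↥I, Al ↑i ↑j * x j ≤ ∑ j : ↥I, A ↑i ↑j * x j :=
        Finset.sum_le_sum fun j _ => mul_le_mul_of_nonneg_right (hA ↑i ↑j).1 (hpos j)
      have h3 : (∑ j : ↥I, A ↑i ↑j * x j)
          = (A.submatrix ((↑) : ↥I → Fin n) ((↑) : ↥I → Fin n)).mulVec x i := rfl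
      calc ∑ j : ↥I, Al ↑i ↑j * x j ≤ ∑ j : ↥I, A ↑i ↑j * x j := h2
        _ = (A.submatrix ((↑) : ↥I → Fin n) ((↑) : ↥I → Fin n)).mulVec x i := h3
        _ < 0 := hneg i
    obtain ⟨i1, hi1⟩ := hI
    have hxtne : ∃ i0, 0 < xt i0 := by
      by_contra hc
      push_neg at hc
      have hzero : xt = 0 := funext fun j => le_antisymm (hc j) (hxtnn j)
      have h4 := hAlx ⟨i1, hi1⟩
      rw [hzero, Matrix.mulVec_zero] at h4
      exact lt_irrefl 0 h4
    obtain ⟨i0, hi0⟩ := hxtne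
    set J : Finset (Fin n) := Finset.univ.filter (fun i => 0 < xt i) with hJ
    have hJne : J.Nonempty := ⟨i0, by simp [hJ, hi0]⟩
    set t : ℝ := J.inf' hJne (fun i => N.mulVec xt i / xt i) with htdef
    have hst : s < t := by
      rw [htdef, Finset.lt_inf'_iff]
      intro i hiJ
      have hxi : 0 < xt i := by
        simp only [hJ, Finset.mem_filter] at hiJ
        exact hiJ.2
      have hiI : i ∈ I := by
        by_contra hiI
        rw [hxt0 i hiI] at hxi
        exact lt_irrefl 0 hxi
      have h4 := hAlx ⟨i, hiI⟩
      rw [hAleq, Matrix.sub_mulVec, Matrix.smul_mulVec, Matrix.one_mulVec] at h4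
      simp only [Pi.sub_apply, Pi.smul_apply, smul_eq_mul] at h4
      rw [lt_div_iff₀ hxi]
      linarith
    have hts : ∀ i, t * xt i ≤ N.mulVec xt i := by
      intro i
      rcases eq_or_lt_of_le (hxtnn i) with h5 | h5
      · rw [← h5, mul_zero]
        exact mulVec_nonneg hN hxtnn i
      · have hiJ : i ∈ J := by
          simp only [hJ, Finset.mem_filter]
          exact ⟨Finset.mem_univ i, h5⟩
        have h6 : t ≤ N.mulVec xt i / xt i := Finset.inf'_le _ hiJ
        calc t * xt i ≤ (N.mulVec xt i / xt i) * xt i :=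
              mul_le_mul_of_nonneg_right h6 h5.le
          _ = N.mulVec xt i := div_mul_cancel₀ _ h5.ne'
    have h7 := le_specRad_of_mulVec_le hN hxtnn hi0 hts
    linarith
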